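/- (Strassen's trilinear block identity) Let R be a commutative ring, let n be a positive natural number, and let N, M, P be 2n×2n matrices over R, written in 2×2 block form with n×n blocks N_{ij}, M_{ij}, P_{ij} (i,j ∈ {1,2}). Then Trace(N·M·P) = Trace((N₁₁+N₂₂)·(M₁₁+M₂₂)·(P₁₁+P₂₂)) + Trace((N₁₂−N₂₂)·(M₂₁+M₂₂)·P₁₁) + Trace((N₂₁−N₁₁)·(M₁₁+M₁₂)·P₂₂) + Trace((N₁₁+N₁₂)·M₂₂·(P₂₁−P₁₁)) + Trace(N₁₁·(M₁₂−M₂₂)·(P₂₁+P₂₂)) + Trace(N₂₂·(M₂₁−M₁₁)·(P₁₁+P₁₂)) + Trace((N₂₁+N₂₂)·M₁₁·(P₁₂−P₂₂)). -/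
import Mathlib


open Matrix

lemma trace_fromBlocks_aux {R : Type*} [CommRing R] {n : ℕ}
    (A B C D : Matrix (Fin n) (Fin n) R) :
    (Matrix.fromBlocks A B C D).trace = A.trace + D.trace := by
  simp [Matrix.trace, Fintype.sum_sum_type, Matrix.diag, Matrix.fromBlocks]

/-- Strassen's trilinear block identity: for `2n×2n` matrices `N`, `M`, `P`
written in `2×2` block form with `n×n` blocks,
`Trace(N·M·P)` decomposes into the seven block traces of Strassen's scheme. -/
theorem strassen_trilinear_block_identity (R : Type*) [CommRing R] (n : ℕ) (hn : 0 < n)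
    (N₁₁ N₁₂ N₂₁ N₂₂ M₁₁ M₁₂ M₂₁ M₂₂ P₁₁ P₁₂ P₂₁ P₂₂ : Matrix (Fin n) (Fin n) R) :
    (Matrix.fromBlocks N₁₁ N₁₂ N₂₁ N₂₂ * Matrix.fromBlocks M₁₁ M₁₂ M₂₁ M₂₂ *
        Matrix.fromBlocks P₁₁ P₁₂ P₂₁ P₂₂).trace =
      ((N₁₁ + N₂₂) * (M₁₁ + M₂₂) * (P₁₁ + P₂₂)).trace +
      ((N₁₂ - N₂₂) * (M₂₁ + M₂₂) * P₁₁).trace +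
      ((N₂₁ - N₁₁) * (M₁₁ + M₁₂) * P₂₂).trace +
      ((N₁₁ + N₁₂) * M₂₂ * (P₂₁ - P₁₁)).trace +
      (N₁₁ * (M₁₂ - M₂₂) * (P₂₁ + P₂₂)).trace +
      (N₂₂ * (M₂₁ - M₁₁) * (P₁₁ + P₁₂)).trace +
      ((N₂₁ + N₂₂) * M₁₁ * (P₁₂ - P₂₂)).trace := by
  simp only [Matrix.fromBlocks_multiply, add_mul, mul_add, sub_mul, mul_sub,
    trace_fromBlocks_aux, Matrix.trace_add, Matrix.trace_sub]
  abel
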